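/- arXiv:1312.0258 — 5 statements merged into one kernel-verified Lean document; each statement's English description precedes it below -/
import Mathlib

section
/- If χ > χ₀ := min over positive integers k of χ_k, where χ_k = (D₁(kπ/L)² + ū)(D₂(kπ/L)² + 1)/(Φ(ū,v̄)(kπ/L)² h′(ū)), then there exists a positive integer k such that the 2×2 real matrix H_k = [[−D₁(kπ/L)² − ū, χΦ(ū,v̄)(kπ/L)²], [h′(ū), −D₂(kπ/L)² − 1]] has a real eigenvalue λ > 0 (so the constant steady state (ū, v̄) is linearly unstable). -/
open Real Set

/-- If `χ` exceeds `χ₀ = min over k ≥ 1 of χ_k`, then for some positive integer `k`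
the linearization matrix `H_k` has a real eigenvalue `λ > 0`, so the constant steady
state `(ū, v̄)` is linearly unstable. -/
theorem stmt1 (D₁ D₂ χ ubar L Φb hb : ℝ)
    (hD₁ : 0 < D₁) (hD₂ : 0 < D₂) (hχpos : 0 < χ) (hubar : 0 < ubar) (hL : 0 < L)
    (hΦb : 0 < Φb) (hhb : 0 < hb)
    (hχ : sInf {c : ℝ | ∃ k : ℕ, 0 < k ∧
        c = (D₁ * ((k : ℝ) * π / L) ^ 2 + ubar) * (D₂ * ((k : ℝ) * π / L) ^ 2 + 1) /
            (Φb * ((k : ℝ) * π / L) ^ 2 * hb)} < χ) :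
    ∃ k : ℕ, 0 < k ∧ ∃ lam : ℝ, 0 < lam ∧ ∃ w : Fin 2 → ℝ, w ≠ 0 ∧
      Matrix.mulVec
        !![-(D₁ * ((k : ℝ) * π / L) ^ 2) - ubar, χ * Φb * ((k : ℝ) * π / L) ^ 2;
           hb, -(D₂ * ((k : ℝ) * π / L) ^ 2) - 1] w = lam • w := by
  have hne : Set.Nonempty {c : ℝ | ∃ k : ℕ, 0 < k ∧
      c = (D₁ * ((k : ℝ) * π / L) ^ 2 + ubar) * (D₂ * ((k : ℝ) * π / L) ^ 2 + 1) /
          (Φb * ((k : ℝ) * π / L) ^ 2 * hb)} := ⟨_, 1, one_pos, rfl⟩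
  obtain ⟨c, ⟨k, hk, hc⟩, hcχ⟩ := exists_lt_of_csInf_lt hne hχ
  subst hc
  refine ⟨k, hk, ?_⟩
  have hkpos : (0 : ℝ) < (k : ℝ) := Nat.cast_pos.mpr hk
  set a := ((k : ℝ) * π / L) ^ 2 with ha
  have hapos : 0 < a := by
    have : 0 < (k : ℝ) * π / L := by positivity
    positivity
  set p := -(D₁ * a) - ubar with hp
  set q := -(D₂ * a) - 1 with hq
  set b := χ * Φb * a with hbdef
  have hbpos : 0 < b := by positivity
  have hden : 0 < Φb * a * hb := by positivity
  have hΔ : p * q - b * hb < 0 := by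
    rw [div_lt_iff₀ hden] at hcχ
    rw [hp, hq, hbdef]
    nlinarith [hcχ]
  set T := p + q with hT
  have hTneg : T < 0 := by
    have h1 : 0 < D₁ * a := by positivity
    have h2 : 0 < D₂ * a := by positivity
    simp only [hT, hp, hq]; linarith
  have hdisc : 0 ≤ T ^ 2 - 4 * (p * q - b * hb) := by nlinarith
  set s := Real.sqrt (T ^ 2 - 4 * (p * q - b * hb)) with hs
  have hsnn : 0 ≤ s := Real.sqrt_nonneg _
  have hs2 : s ^ 2 = T ^ 2 - 4 * (p * q - b * hb) := Real.sq_sqrt hdisc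
  have hsT : -T < s := by nlinarith
  set lam := (T + s) / 2 with hlam
  have hlampos : 0 < lam := by simp only [hlam]; linarith
  have hchar : lam ^ 2 - T * lam + (p * q - b * hb) = 0 := by
    have h4 : 4 * (lam ^ 2 - T * lam + (p * q - b * hb))
        = s ^ 2 - T ^ 2 + 4 * (p * q - b * hb) := by
      simp only [hlam]; ring
    linarith [hs2, h4]
  refine ⟨lam, hlampos, ![b, lam - p], ?_, ?_⟩
  · intro h
    exact absurd (congrFun h 0) (by simpa using hbpos.ne')
  · have hchar' : lam ^ 2 - (p + q) * lam + (p * q - b * hb) = 0 := by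
      rw [← hT]; exact hchar
    funext i
    fin_cases i <;>
      simp [Matrix.mulVec, dotProduct, Fin.sum_univ_two]
    · ring
    · linear_combination -hchar'
end

section
/- For positive integers j ≠ k, one has χ_j = χ_k if and only if ū = j²k²D₁D₂(π/L)⁴, where χ_k = (D₁(kπ/L)² + ū)(D₂(kπ/L)² + 1)/(Φ(ū,v̄)(kπ/L)² h′(ū)). Equivalently, the bifurcation values χ_k are pairwise distinct (χ_k ≠ χ_j for all j ≠ k) precisely when ū ≠ j²k²D₁D₂(π/L)⁴ for all positive integers j ≠ k. -/
open Real Set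

/-- For distinct positive integers `j ≠ k`, `χ_j = χ_k` iff `ū = j²k²D₁D₂(π/L)⁴`;
equivalently, the bifurcation values are pairwise distinct precisely when
`ū ≠ j²k²D₁D₂(π/L)⁴` for all positive integers `j ≠ k`. -/
theorem stmt4 (D₁ D₂ ubar L Φb hb : ℝ)
    (hD₁ : 0 < D₁) (hD₂ : 0 < D₂) (hubar : 0 < ubar) (hL : 0 < L)
    (hΦb : 0 < Φb) (hhb : 0 < hb)
    (chi : ℕ → ℝ)
    (hchi : ∀ k : ℕ, chi k =
      (D₁ * ((k : ℝ) * π / L) ^ 2 + ubar) * (D₂ * ((k : ℝ) * π / L) ^ 2 + 1) /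
        (Φb * ((k : ℝ) * π / L) ^ 2 * hb)) :
    (∀ j k : ℕ, 0 < j → 0 < k → j ≠ k →
      (chi j = chi k ↔ ubar = (j : ℝ) ^ 2 * (k : ℝ) ^ 2 * D₁ * D₂ * (π / L) ^ 4)) ∧
    ((∀ j k : ℕ, 0 < j → 0 < k → j ≠ k → chi j ≠ chi k) ↔
      (∀ j k : ℕ, 0 < j → 0 < k → j ≠ k →
        ubar ≠ (j : ℝ) ^ 2 * (k : ℝ) ^ 2 * D₁ * D₂ * (π / L) ^ 4)) := by
  have hπ : 0 < π := Real.pi_pos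
  have key : ∀ j k : ℕ, 0 < j → 0 < k → j ≠ k →
      (chi j = chi k ↔ ubar = (j : ℝ) ^ 2 * (k : ℝ) ^ 2 * D₁ * D₂ * (π / L) ^ 4) := by
    intro j k hj hk hjk
    set x : ℝ := ((j : ℝ) * π / L) ^ 2 with hxdef
    set y : ℝ := ((k : ℝ) * π / L) ^ 2 with hydef
    have hjR : (0 : ℝ) < (j : ℝ) := by exact_mod_cast hj
    have hkR : (0 : ℝ) < (k : ℝ) := by exact_mod_cast hk
    have hx : 0 < x := by positivity
    have hy : 0 < y := by positivity
    have hjk' : (j : ℝ) ≠ (k : ℝ) := by exact_mod_cast hjk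
    have hxy : x ≠ y := by
      intro h
      rw [hxdef, hydef] at h
      field_simp at h
      exact hjk' ((pow_left_inj₀ hjR.le hkR.le two_ne_zero).mp (by linarith [h]))
    have hdx : Φb * x * hb ≠ 0 := by positivity
    have hdy : Φb * y * hb ≠ 0 := by positivity
    have hxyval : x * y = (j : ℝ) ^ 2 * (k : ℝ) ^ 2 * (π / L) ^ 4 := by
      rw [hxdef, hydef]; field_simp
    rw [hchi j, hchi k, div_eq_div_iff (by positivity) (by positivity)]
    constructor
    · intro h
      have h2 : (x - y) * (D₁ * D₂ * x * y - ubar) * (Φb * hb) = 0 := by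
        linear_combination h
      rcases mul_eq_zero.mp h2 with h3 | h3
      · rcases mul_eq_zero.mp h3 with h4 | h4
        · exact absurd (by linarith [sub_eq_zero.mp h4]) hxy
        · have : ubar = D₁ * D₂ * x * y := by linarith
          rw [this]; linear_combination D₁ * D₂ * hxyval
      · exact absurd h3 (by positivity)
    · intro h
      have hub : ubar = D₁ * D₂ * x * y := by
        rw [h]; linear_combination D₁ * D₂ * hxyval
      linear_combination (y - x) * (Φb * hb) * hub
  refine ⟨key, ?_⟩
  constructor
  · intro H j k hj hk hjk h
    exact H j k hj hk hjk ((key j k hj hk hjk).mpr h)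
  · intro H j k hj hk hjk h
    exact H j k hj hk hjk ((key j k hj hk hjk).mp h)
end

section
/- Let k be a positive integer, ρ = kπ/L, t = D₂ρ², and define a = (14D₂ρ⁶ − ρ⁴)/ū², b = −(2D₂ρ⁴ + 5ρ²)/(2ū), c = 5D₂ρ² + 7/2, F(r) = ar² + br + c, and r₃ = (ū/(4D₂))(L/(kπ))⁴. Then F(r₃) = (80t³ + 52t² + 4t − 1)/(16t²), the cubic factors as 80t³ + 52t² + 4t − 1 = 80(t + 1/2)(t + 1/4)(t − 1/10), and consequently for D₂ > 0: F(r₃) > 0 if and only if D₂ > (1/10)(L/(kπ))², F(r₃) = 0 if and only if D₂ = (1/10)(L/(kπ))², and F(r₃) < 0 if and only if D₂ < (1/10)(L/(kπ))². -/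
open Real Set

/-- Value of the quadratic `F` at `r₃`: with `t = D₂ρ²`,
`F(r₃) = (80t³ + 52t² + 4t − 1)/(16t²)`, the cubic factors as
`80(t + 1/2)(t + 1/4)(t − 1/10)`, and the sign of `F(r₃)` is determined by the
position of `D₂` relative to `(1/10)(L/(kπ))²`. -/
theorem stmt16 (D₂ ubar L : ℝ)
    (hD₂ : 0 < D₂) (hubar : 0 < ubar) (hL : 0 < L)
    (k : ℕ) (hk : 0 < k)
    (ρ t a b c r₃ : ℝ) (F : ℝ → ℝ)
    (hρ : ρ = (k : ℝ) * π / L) (ht : t = D₂ * ρ ^ 2)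
    (ha : a = (14 * D₂ * ρ ^ 6 - ρ ^ 4) / ubar ^ 2)
    (hb : b = -(2 * D₂ * ρ ^ 4 + 5 * ρ ^ 2) / (2 * ubar))
    (hc : c = 5 * D₂ * ρ ^ 2 + 7 / 2)
    (hF : ∀ r : ℝ, F r = a * r ^ 2 + b * r + c)
    (hr₃ : r₃ = ubar / (4 * D₂) * (L / ((k : ℝ) * π)) ^ 4) :
    F r₃ = (80 * t ^ 3 + 52 * t ^ 2 + 4 * t - 1) / (16 * t ^ 2) ∧
    80 * t ^ 3 + 52 * t ^ 2 + 4 * t - 1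
      = 80 * (t + 1 / 2) * (t + 1 / 4) * (t - 1 / 10) ∧
    (0 < F r₃ ↔ (1 / 10) * (L / ((k : ℝ) * π)) ^ 2 < D₂) ∧
    (F r₃ = 0 ↔ D₂ = (1 / 10) * (L / ((k : ℝ) * π)) ^ 2) ∧
    (F r₃ < 0 ↔ D₂ < (1 / 10) * (L / ((k : ℝ) * π)) ^ 2) := by
  have hπ := Real.pi_pos
  have hk' : (0:ℝ) < (k:ℝ) := by exact_mod_cast hk
  have hρ0 : 0 < ρ := by rw [hρ]; positivity
  have ht0 : 0 < t := by rw [ht]; positivity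
  have h2p : (0:ℝ) < ρ ^ 2 := by positivity
  have hinv : L / ((k : ℝ) * π) = ρ⁻¹ := by
    rw [hρ]; field_simp
  have h1 : F r₃ = (80 * t ^ 3 + 52 * t ^ 2 + 4 * t - 1) / (16 * t ^ 2) := by
    rw [hF, hr₃, hinv, ha, hb, hc, ht]
    field_simp
    ring
  have h2 : 80 * t ^ 3 + 52 * t ^ 2 + 4 * t - 1
      = 80 * (t + 1 / 2) * (t + 1 / 4) * (t - 1 / 10) := by ring
  have hP : 0 < 80 * (t + 1 / 2) * (t + 1 / 4) / (16 * t ^ 2) := by positivity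
  have hFr : F r₃ = (80 * (t + 1 / 2) * (t + 1 / 4) / (16 * t ^ 2)) * (t - 1 / 10) := by
    rw [h1, h2]; ring
  have e : (1/10 : ℝ) * ρ⁻¹ ^ 2 = (1/10) / ρ ^ 2 := by
    rw [inv_pow]; ring
  have hiff1 : (1 / 10) * (L / ((k : ℝ) * π)) ^ 2 < D₂ ↔ 1/10 < t := by
    rw [hinv, e, div_lt_iff₀ h2p, ht]
  have hiff2 : D₂ = (1 / 10) * (L / ((k : ℝ) * π)) ^ 2 ↔ t = 1/10 := by
    rw [hinv, e, eq_div_iff h2p.ne', ht]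
  have hiff3 : D₂ < (1 / 10) * (L / ((k : ℝ) * π)) ^ 2 ↔ t < 1/10 := by
    rw [hinv, e, lt_div_iff₀ h2p, ht]
  refine ⟨h1, h2, ?_, ?_, ?_⟩
  · rw [hFr, hiff1, mul_pos_iff_of_pos_left hP, sub_pos]
  · rw [hFr, hiff2]
    constructor
    · intro h
      rcases mul_eq_zero.mp h with h' | h'
      · exact absurd h' hP.ne'
      · linarith [sub_eq_zero.mp h']
    · intro h; rw [h]; ring
  · rw [hFr, hiff3]
    constructor
    · intro h
      by_contra h'
      push_neg at h'
      exact absurd h (not_lt.mpr (mul_nonneg hP.le (by linarith)))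
    · intro h
      exact mul_neg_of_pos_of_neg hP (by linarith)
end

section
/- Let k be a positive integer and assume 0 < D₂ ≤ (1/14)(L/(kπ))². With ρ = kπ/L, define a = (14D₂ρ⁶ − ρ⁴)/ū², b = −(2D₂ρ⁴ + 5ρ²)/(2ū), c = 5D₂ρ² + 7/2, F(r) = ar² + br + c, and r₃ = (ū/(4D₂))(L/(kπ))⁴. Then F has a unique positive root r₂, and r₂ < r₃; moreover for D₁ > 0 with D₁ ≠ r₃: F(D₁)/(D₁ − r₃) > 0 if and only if r₂ < D₁ < r₃, and F(D₁)/(D₁ − r₃) < 0 if and only if D₁ ∈ (0, r₂) ∪ (r₃, ∞). -/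
open Real Set

set_option maxHeartbeats 1600000 in
/-- Case `0 < D₂ ≤ (1/14)(L/(kπ))²`: the quadratic `F` has a unique positive root `r₂`,
`r₂ < r₃`, and the sign of `F(D₁)/(D₁ − r₃)` (which equals the sign of the pitchfork
coefficient `K₃`) is positive exactly on `(r₂, r₃)` and negative on `(0, r₂) ∪ (r₃, ∞)`. -/
theorem stmt18 (D₂ ubar L : ℝ)
    (hubar : 0 < ubar) (hL : 0 < L)
    (k : ℕ) (hk : 0 < k)
    (hD₂pos : 0 < D₂) (hD₂le : D₂ ≤ (1 / 14) * (L / ((k : ℝ) * π)) ^ 2)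
    (ρ a b c r₃ : ℝ) (F : ℝ → ℝ)
    (hρ : ρ = (k : ℝ) * π / L)
    (ha : a = (14 * D₂ * ρ ^ 6 - ρ ^ 4) / ubar ^ 2)
    (hb : b = -(2 * D₂ * ρ ^ 4 + 5 * ρ ^ 2) / (2 * ubar))
    (hc : c = 5 * D₂ * ρ ^ 2 + 7 / 2)
    (hF : ∀ r : ℝ, F r = a * r ^ 2 + b * r + c)
    (hr₃ : r₃ = ubar / (4 * D₂) * (L / ((k : ℝ) * π)) ^ 4) :
    ∃ r₂ : ℝ, 0 < r₂ ∧ F r₂ = 0 ∧ (∀ r : ℝ, 0 < r → F r = 0 → r = r₂) ∧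
      r₂ < r₃ ∧
      ∀ D₁ : ℝ, 0 < D₁ → D₁ ≠ r₃ →
        ((0 < F D₁ / (D₁ - r₃) ↔ r₂ < D₁ ∧ D₁ < r₃) ∧
         (F D₁ / (D₁ - r₃) < 0 ↔ D₁ < r₂ ∨ r₃ < D₁)) := by
  have hkπ : 0 < (k : ℝ) * π := by
    have : (0:ℝ) < (k:ℝ) := by exact_mod_cast hk
    positivity
  have hρpos : 0 < ρ := by rw [hρ]; positivity
  have hinv : L / ((k : ℝ) * π) = 1 / ρ := by
    rw [hρ]; rw [one_div_div]
  have hm : D₂ * ρ ^ 2 ≤ 1 / 14 := by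
    rw [hinv] at hD₂le
    have h1 : (1/ρ)^2 * ρ^2 = 1 := by field_simp
    nlinarith [mul_le_mul_of_nonneg_right hD₂le (sq_nonneg ρ)]
  have hapos : a ≤ 0 := by
    rw [ha]
    apply div_nonpos_of_nonpos_of_nonneg
    · nlinarith [mul_le_mul_of_nonneg_left hm (le_of_lt (pow_pos hρpos 4))]
    · positivity
  have hbneg : b < 0 := by
    rw [hb]
    apply div_neg_of_neg_of_pos
    · nlinarith [pow_pos hρpos 2, pow_pos hρpos 4]
    · linarith
  have hcpos : 0 < c := by rw [hc]; positivity
  have hr₃pos : 0 < r₃ := by rw [hr₃, hinv]; positivity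
  -- F is strictly decreasing on [0, ∞)
  have hanti : ∀ x y : ℝ, 0 ≤ x → x < y → F y < F x := by
    intro x y hx hxy
    rw [hF, hF]
    have h1 : a * (y + x) + b < 0 := by nlinarith [mul_nonpos_of_nonpos_of_nonneg hapos (by linarith : (0:ℝ) ≤ y + x)]
    have h2 := mul_neg_of_pos_of_neg (sub_pos.2 hxy) h1
    nlinarith [h2]
  have hF0 : F 0 = c := by rw [hF]; ring
  -- F r₃ < 0
  have hFr₃neg : F r₃ < 0 := by
    have hub : ubar ≠ 0 := ne_of_gt hubar
    have hρne : ρ ≠ 0 := ne_of_gt hρpos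
    have hD₂ne : D₂ ≠ 0 := ne_of_gt hD₂pos
    have h1 : F r₃ * (16 * (D₂ * ρ ^ 2) ^ 2) =
        80 * (D₂ * ρ ^ 2) ^ 3 + 52 * (D₂ * ρ ^ 2) ^ 2 + 4 * (D₂ * ρ ^ 2) - 1 := by
      rw [hF, ha, hb, hc, hr₃, hinv]
      field_simp
      ring
    have hmpos : 0 < D₂ * ρ ^ 2 := by positivity
    set m := D₂ * ρ ^ 2 with hmdef
    have h2 : m * m ≤ (1/14) * m := by
      have := mul_le_mul_of_nonneg_left hm hmpos.le
      linarith
    have h3 : m * (m * m) ≤ (1/14) * (m * m) := by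
      have := mul_le_mul_of_nonneg_left hm (mul_nonneg hmpos.le hmpos.le)
      nlinarith
    have hp : 80 * m ^ 3 + 52 * m ^ 2 + 4 * m - 1 < 0 := by nlinarith [h2, h3]
    by_contra hcon
    push_neg at hcon
    have h4 : (0:ℝ) ≤ 16 * m ^ 2 := by positivity
    have := mul_nonneg hcon h4
    linarith [h1]
  have hFc : Continuous F := by
    have hFe : F = fun r => a * r ^ 2 + b * r + c := funext hF
    rw [hFe]
    exact ((continuous_const.mul (continuous_pow 2)).add (continuous_const.mul continuous_id)).add continuous_const
  obtain ⟨r₂, hr₂mem, hFr₂⟩ :=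
    intermediate_value_Icc' (le_of_lt hr₃pos) hFc.continuousOn
      (by exact ⟨hFr₃neg.le, by rw [hF0]; exact hcpos.le⟩ : (0:ℝ) ∈ Icc (F r₃) (F 0))
  have hr₂pos : 0 < r₂ := by
    rcases lt_or_eq_of_le hr₂mem.1 with h | h
    · exact h
    · exfalso; rw [← h, hF0] at hFr₂; linarith
  have hr₂r₃ : r₂ < r₃ := by
    rcases lt_or_eq_of_le hr₂mem.2 with h | h
    · exact h
    · exfalso; rw [h] at hFr₂; linarith
  -- sign of F on (0,∞)
  have hsignpos : ∀ r : ℝ, 0 ≤ r → r < r₂ → 0 < F r := by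
    intro r hr hrlt
    have := hanti r r₂ hr hrlt
    linarith [hFr₂]
  have hsignneg : ∀ r : ℝ, r₂ < r → F r < 0 := by
    intro r hrlt
    have := hanti r₂ r (le_of_lt hr₂pos) hrlt
    linarith [hFr₂]
  refine ⟨r₂, hr₂pos, hFr₂, ?_, hr₂r₃, ?_⟩
  · intro r hr hFr
    rcases lt_trichotomy r r₂ with h | h | h
    · have := hsignpos r hr.le h; linarith
    · exact h
    · have := hsignneg r h; linarith
  · intro D₁ hD₁ hne
    rcases lt_trichotomy D₁ r₂ with h | h | h
    · have hFpos := hsignpos D₁ hD₁.le h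
      have hq : F D₁ / (D₁ - r₃) < 0 :=
        div_neg_of_pos_of_neg hFpos (by linarith)
      exact ⟨⟨fun hx => absurd hx (by linarith), fun ⟨h1, h2⟩ => absurd h (by linarith)⟩,
        ⟨fun _ => Or.inl h, fun _ => hq⟩⟩
    · have hq : F D₁ / (D₁ - r₃) = 0 := by rw [h, hFr₂, zero_div]
      exact ⟨⟨fun hx => absurd hx (by rw [hq]; exact lt_irrefl 0),
              fun ⟨h1, h2⟩ => absurd h1 (by rw [h]; exact lt_irrefl r₂)⟩,
             ⟨fun hx => absurd hx (by rw [hq]; exact lt_irrefl 0),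
              fun hx => by rcases hx with h1 | h1 <;> [exact absurd h1 (by rw [h]; exact lt_irrefl r₂); exact absurd h1 (by rw [h]; linarith)]⟩⟩
    · have hFneg := hsignneg D₁ h
      rcases lt_or_gt_of_ne hne with hlt | hgt
      · have hq : 0 < F D₁ / (D₁ - r₃) :=
          div_pos_of_neg_of_neg hFneg (by linarith)
        exact ⟨⟨fun _ => ⟨h, hlt⟩, fun _ => hq⟩,
               ⟨fun hx => absurd hx (by linarith), fun hx => by rcases hx with h1 | h1 <;> linarith⟩⟩
      · have hq : F D₁ / (D₁ - r₃) < 0 :=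
          div_neg_of_neg_of_pos hFneg (by linarith)
        exact ⟨⟨fun hx => absurd hx (by linarith), fun ⟨h1, h2⟩ => absurd h2 (by linarith)⟩,
               ⟨fun _ => Or.inr hgt, fun _ => hq⟩⟩
end

section
/- Let k be a positive integer and D₂ = (1/10)(L/(kπ))². With ρ = kπ/L, define a = (14D₂ρ⁶ − ρ⁴)/ū², b = −(2D₂ρ⁴ + 5ρ²)/(2ū), c = 5D₂ρ² + 7/2, F(r) = ar² + br + c, and r₃ = (ū/(4D₂))(L/(kπ))⁴. Then a = (2/5)ρ⁴/ū² > 0, r₃ = (5/2)ū(L/(kπ))², and F(r) = a(r − (5/2)ū(L/(kπ))²)(r − 4ū(L/(kπ))²); consequently for D₁ > 0 with D₁ ≠ r₃: F(D₁)/(D₁ − r₃) > 0 if and only if D₁ > 4ū(L/(kπ))², and F(D₁)/(D₁ − r₃) < 0 if and only if 0 < D₁ < 4ū(L/(kπ))² and D₁ ≠ r₃. -/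
open Real Set

/-- Case `D₂ = (1/10)(L/(kπ))²`: then `a = (2/5)ρ⁴/ū² > 0`, `r₃ = (5/2)ū(L/(kπ))²`,
`F` factors as `a(r − (5/2)ū(L/(kπ))²)(r − 4ū(L/(kπ))²)`, and the sign of
`F(D₁)/(D₁ − r₃)` is positive iff `D₁ > 4ū(L/(kπ))²` and negative iff
`0 < D₁ < 4ū(L/(kπ))²` with `D₁ ≠ r₃`. -/
theorem stmt19 (D₂ ubar L : ℝ)
    (hubar : 0 < ubar) (hL : 0 < L)
    (k : ℕ) (hk : 0 < k)
    (hD₂ : D₂ = (1 / 10) * (L / ((k : ℝ) * π)) ^ 2)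
    (ρ a b c r₃ : ℝ) (F : ℝ → ℝ)
    (hρ : ρ = (k : ℝ) * π / L)
    (ha : a = (14 * D₂ * ρ ^ 6 - ρ ^ 4) / ubar ^ 2)
    (hb : b = -(2 * D₂ * ρ ^ 4 + 5 * ρ ^ 2) / (2 * ubar))
    (hc : c = 5 * D₂ * ρ ^ 2 + 7 / 2)
    (hF : ∀ r : ℝ, F r = a * r ^ 2 + b * r + c)
    (hr₃ : r₃ = ubar / (4 * D₂) * (L / ((k : ℝ) * π)) ^ 4) :
    a = (2 / 5) * ρ ^ 4 / ubar ^ 2 ∧ 0 < a ∧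
    r₃ = (5 / 2) * ubar * (L / ((k : ℝ) * π)) ^ 2 ∧
    (∀ r : ℝ, F r = a * (r - (5 / 2) * ubar * (L / ((k : ℝ) * π)) ^ 2) *
        (r - 4 * ubar * (L / ((k : ℝ) * π)) ^ 2)) ∧
    ∀ D₁ : ℝ, 0 < D₁ → D₁ ≠ r₃ →
      ((0 < F D₁ / (D₁ - r₃) ↔ 4 * ubar * (L / ((k : ℝ) * π)) ^ 2 < D₁) ∧
       (F D₁ / (D₁ - r₃) < 0 ↔ D₁ < 4 * ubar * (L / ((k : ℝ) * π)) ^ 2)) := by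
  have hπ : (0:ℝ) < π := Real.pi_pos
  have hk' : (0:ℝ) < (k:ℝ) := by exact_mod_cast hk
  have hkπ : (0:ℝ) < (k:ℝ) * π := by positivity
  have hkπ0 : ((k:ℝ) * π) ≠ 0 := ne_of_gt hkπ
  have hL0 : L ≠ 0 := ne_of_gt hL
  have hu0 : ubar ≠ 0 := ne_of_gt hubar
  have hρpos : 0 < ρ := by rw [hρ]; positivity
  have haval : a = (2 / 5) * ρ ^ 4 / ubar ^ 2 := by
    rw [ha, hD₂, hρ]; field_simp; ring
  have hapos : 0 < a := by rw [haval]; positivity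
  have hr₃val : r₃ = (5 / 2) * ubar * (L / ((k : ℝ) * π)) ^ 2 := by
    rw [hr₃, hD₂]; field_simp; ring
  have hbval : b = -(2 * ((1 / 10) * (L / ((k : ℝ) * π)) ^ 2) * ((k : ℝ) * π / L) ^ 4
      + 5 * ((k : ℝ) * π / L) ^ 2) / (2 * ubar) := by rw [hb, hD₂, hρ]
  have hcval : c = 5 * ((1 / 10) * (L / ((k : ℝ) * π)) ^ 2) * ((k : ℝ) * π / L) ^ 2 + 7 / 2 := by
    rw [hc, hD₂, hρ]
  have hfac : ∀ r : ℝ, F r = a * (r - (5 / 2) * ubar * (L / ((k : ℝ) * π)) ^ 2) *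
      (r - 4 * ubar * (L / ((k : ℝ) * π)) ^ 2) := by
    intro r
    rw [hF, haval, hbval, hcval, hρ]
    field_simp
    ring
  refine ⟨haval, hapos, hr₃val, hfac, ?_⟩
  intro D₁ hD₁ hne
  set M : ℝ := 4 * ubar * (L / ((k : ℝ) * π)) ^ 2 with hM
  have hsub : D₁ - r₃ ≠ 0 := sub_ne_zero.mpr hne
  have hquot : F D₁ / (D₁ - r₃) = a * (D₁ - M) := by
    rw [hfac, ← hr₃val]
    field_simp
  rw [hquot]
  constructor
  · rw [mul_pos_iff_of_pos_left hapos, sub_pos]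
  · rw [mul_neg_iff]
    simp [hapos, hapos.not_gt, sub_neg, asymm hapos]
end
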